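/- Let I be a monomial ideal of R = k[x_1,...,x_d] minimally generated by u monomials x^{a_1},...,x^{a_u}, and for a positive integer m let I^{[m]} denote the ideal generated by x^{m·a_1},...,x^{m·a_u}. If r ≥ u(m-1)+1 then I^r = I^{r-m}·I^{[m]}. -/

import Mathlib

open MvPolynomial

lemma prod_mem_pow_card' {R : Type*} [CommRing R] (I : Ideal R) {ι : Type*} [DecidableEq ι]
    (s : Finset ι) (f : ι → R) (h : ∀ j ∈ s, f j ∈ I) : ∏ j ∈ s, f j ∈ I ^ s.card := by
  induction s using Finset.induction with
  | empty => simp [Ideal.one_eq_top]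
  | insert _ _ hx ih =>
    rename_i b s
    rw [Finset.prod_insert hx, Finset.card_insert_of_notMem hx, pow_succ']
    exact Ideal.mul_mem_mul (h b (Finset.mem_insert_self _ _))
      (ih fun j hj => h j (Finset.mem_insert_of_mem hj))

/-- let `I` be a monomial ideal of `R = k[x_1,…,x_d]` minimally generated
by the `u` monomials `x^{a_1},…,x^{a_u}` (minimality of a monomial generating set means
no generator divides another), and let `I^{[m]}` be the ideal generated by
`x^{m a_1},…,x^{m a_u}`. If `r ≥ u(m-1) + 1` then `I^r = I^{r-m} · I^{[m]}`. -/
theorem pow_eq_pow_mul_bracket (k : Type*) [Field k] (d u m r : ℕ)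
    (a : Fin u → (Fin d →₀ ℕ))
    (I Im : Ideal (MvPolynomial (Fin d) k))
    (hI : I = Ideal.span (Set.range fun i => monomial (a i) (1 : k)))
    (hmin : ∀ i j : Fin u, a i ≤ a j → i = j)
    (hIm : Im = Ideal.span (Set.range fun i => monomial (m • a i) (1 : k)))
    (hm : 1 ≤ m) (hr : u * (m - 1) + 1 ≤ r) :
    I ^ r = I ^ (r - m) * Im := by
  subst hI hIm
  rcases Nat.eq_zero_or_pos u with hu | hu
  · subst hu
    rw [Set.range_eq_empty, Set.range_eq_empty, Ideal.span_empty, ← Ideal.zero_eq_bot,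
      zero_pow (show r ≠ 0 by omega), mul_zero]
  have hmr : m ≤ r := by
    have : 1 * (m - 1) + 1 ≤ u * (m - 1) + 1 := by
      have := Nat.mul_le_mul_right (m - 1) hu
      omega
    omega
  set I : Ideal (MvPolynomial (Fin d) k) :=
    Ideal.span (Set.range fun i => monomial (a i) (1 : k)) with hI
  set Im : Ideal (MvPolynomial (Fin d) k) :=
    Ideal.span (Set.range fun i => monomial (m • a i) (1 : k)) with hIm
  have hgen : ∀ i : Fin u, monomial (a i) (1 : k) ∈ I :=
    fun i => Ideal.subset_span ⟨i, rfl⟩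
  apply le_antisymm
  · -- I^r ≤ I^(r-m) * Im
    rw [hI, ← Ideal.submodule_span_eq, Submodule.span_pow, Ideal.submodule_span_eq, Ideal.span_le]
    intro x hx
    rw [Set.mem_pow] at hx
    obtain ⟨f, hf⟩ := hx
    choose g hg using fun j : Fin r => (f j).2
    have hx' : x = ∏ j : Fin r, monomial (a (g j)) (1 : k) := by
      rw [← hf, List.prod_ofFn]
      exact Finset.prod_congr rfl fun j _ => (hg j).symm
    -- pigeonhole
    obtain ⟨i, -, hi⟩ := Finset.exists_lt_card_fiber_of_mul_lt_card_of_maps_to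
      (s := (Finset.univ : Finset (Fin r))) (t := (Finset.univ : Finset (Fin u)))
      (f := g) (n := m - 1) (fun _ _ => Finset.mem_univ _)
      (by simpa using by omega)
    obtain ⟨T, hTsub, hTcard⟩ := Finset.exists_subset_card_eq (n := m)
      (s := {x ∈ (Finset.univ : Finset (Fin r)) | g x = i}) (by omega)
    have hTg : ∀ j ∈ T, g j = i := fun j hj => by
      have := hTsub hj; simp only [Finset.mem_filter] at this; exact this.2
    have hsplit : x = (∏ j ∈ Tᶜ, monomial (a (g j)) (1 : k)) *
        ∏ j ∈ T, monomial (a (g j)) (1 : k) := by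
      rw [hx', mul_comm, Finset.prod_mul_prod_compl]
    rw [hsplit]
    have h1 : (∏ j ∈ Tᶜ, monomial (a (g j)) (1 : k)) ∈ I ^ (r - m) := by
      have := prod_mem_pow_card' I Tᶜ (fun j => monomial (a (g j)) (1 : k))
        (fun j _ => hgen (g j))
      rwa [Finset.card_compl, Fintype.card_fin, hTcard] at this
    have h2 : (∏ j ∈ T, monomial (a (g j)) (1 : k)) ∈ Im := by
      have : (∏ j ∈ T, monomial (a (g j)) (1 : k)) = monomial (m • a i) (1 : k) := by
        rw [Finset.prod_congr rfl fun j hj => by rw [hTg j hj]]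
        rw [Finset.prod_const, monomial_pow, one_pow, hTcard]
      rw [this]
      exact Ideal.subset_span ⟨i, rfl⟩
    exact Submodule.mul_mem_mul h1 h2
  · -- I^(r-m) * Im ≤ I^r
    have hImI : Im ≤ I ^ m := by
      rw [hIm, Ideal.span_le]
      rintro x ⟨i, rfl⟩
      simp only
      rw [← one_pow m, ← monomial_pow]
      exact Ideal.pow_mem_pow (hgen i) m
    calc I ^ (r - m) * Im ≤ I ^ (r - m) * I ^ m :=
          Ideal.mul_mono le_rfl hImI
      _ = I ^ r := by rw [← pow_add, Nat.sub_add_cancel hmr]
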